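/- arXiv:2308.01366 — 2 statements merged into one kernel-verified Lean document; each statement's English description precedes it below -/
import Mathlib

section
/- Let x, y ∈ ℝⁿ \ {0}, u a unit vector, with |y − x| ≤ ξ, |x| ≥ t^{2-ε}, and with both angles of x and y with u being O(t^{-ε/2}). Then |x|·(cos∠(y,u) − cos∠(x,u)) = O(t^{-ε/2}) as t → ∞. -/
open InnerProductGeometry RealInnerProductSpace

/-- If `X ≥ 0`, `X^2 = p^2 - a^2` with `a = cos θ · p`, `0 ≤ θ ≤ π`, `θ ≤ m`,
`0 ≤ p`, then `X ≤ p * m`. -/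
lemma perp_norm_le_aux {θ m p a X : ℝ} (h0 : 0 ≤ θ) (hπ : θ ≤ Real.pi) (hθ : θ ≤ m)
    (ha : Real.cos θ * p = a) (hX2 : X ^ 2 = p ^ 2 - a ^ 2) (hX0 : 0 ≤ X) (hp : 0 ≤ p) :
    X ≤ p * m := by
  have hsinn : 0 ≤ Real.sin θ := Real.sin_nonneg_of_nonneg_of_le_pi h0 hπ
  have hsin : Real.sin θ ≤ m := (Real.sin_le h0).trans hθ
  have hsin2 : Real.sin θ ^ 2 ≤ m ^ 2 := pow_le_pow_left₀ hsinn hsin 2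
  have hX2' : X ^ 2 = p ^ 2 * Real.sin θ ^ 2 := by
    rw [hX2, Real.sin_sq, ← ha]; ring
  have h1 : X ^ 2 ≤ (p * m) ^ 2 := by
    calc X ^ 2 = p ^ 2 * Real.sin θ ^ 2 := hX2'
    _ ≤ p ^ 2 * m ^ 2 := mul_le_mul_of_nonneg_left hsin2 (sq_nonneg p)
    _ = (p * m) ^ 2 := by ring
  exact (pow_le_pow_iff_left₀ hX0 (mul_nonneg hp (h0.trans hθ)) two_ne_zero).mp h1

set_option maxHeartbeats 1000000 in
/-- Key cosine-difference estimate: under small-angle conditions,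
    ‖x‖·(cos∠(y,u) - cos∠(x,u)) = O(t^{-ε/2}). -/
theorem cosine_difference_estimate (n : ℕ) (ξ ε c : ℝ) (hξ : 0 < ξ) (hε : 0 < ε)
    (hε1 : ε < 1) (hc : 0 < c) (u : EuclideanSpace ℝ (Fin n)) (hu : ‖u‖ = 1) :
    ∃ C T : ℝ, 0 < C ∧ ∀ t : ℝ, T ≤ t → ∀ x y : EuclideanSpace ℝ (Fin n),
      x ≠ 0 → y ≠ 0 → ‖y - x‖ ≤ ξ → t ^ (2 - ε) ≤ ‖x‖ →
      InnerProductGeometry.angle x u ≤ c * t ^ (-(ε / 2)) →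
      InnerProductGeometry.angle y u ≤ c * t ^ (-(ε / 2)) →
      |‖x‖ * (Real.cos (InnerProductGeometry.angle y u) -
        Real.cos (InnerProductGeometry.angle x u))| ≤ C * t ^ (-(ε / 2)) := by
  refine ⟨3 * ξ * c + 3 * ξ * c ^ 2, max 1 (max ξ (c ^ (2 / ε))), by positivity, ?_⟩
  intro t ht x y hx0 hy0 hyx hxt hax hay
  have ht1 : (1 : ℝ) ≤ t := le_trans (le_max_left _ _) ht
  have ht0 : (0 : ℝ) < t := lt_of_lt_of_le one_pos ht1
  set s : ℝ := t ^ (-(ε / 2)) with hs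
  have hs0 : 0 < s := Real.rpow_pos_of_pos ht0 _
  have hs1 : s ≤ 1 := by
    calc s ≤ t ^ (0 : ℝ) := Real.rpow_le_rpow_of_exponent_le ht1 (by linarith)
    _ = 1 := Real.rpow_zero t
  -- c * s ≤ 1
  have hcs : c * s ≤ 1 := by
    have hc2 : c ^ (2 / ε) ≤ t :=
      le_trans (le_trans (le_max_right _ _) (le_max_right _ _)) ht
    have hcle : c ≤ t ^ (ε / 2) := by
      have h1 : (c ^ (2 / ε)) ^ (ε / 2) ≤ t ^ (ε / 2) :=
        Real.rpow_le_rpow (by positivity) hc2 (by positivity)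
      rwa [← Real.rpow_mul hc.le, div_mul_div_comm, mul_comm,
        div_self (by positivity : ε * 2 ≠ 0), Real.rpow_one] at h1
    have htp0 : (0 : ℝ) < t ^ (ε / 2) := Real.rpow_pos_of_pos ht0 _
    have hsinv : s = (t ^ (ε / 2))⁻¹ := by
      rw [hs, ← Real.rpow_neg ht0.le]
    calc c * s = c * (t ^ (ε / 2))⁻¹ := by rw [hsinv]
    _ ≤ t ^ (ε / 2) * (t ^ (ε / 2))⁻¹ :=
        mul_le_mul_of_nonneg_right hcle (inv_nonneg.mpr htp0.le)
    _ = 1 := mul_inv_cancel₀ htp0.ne'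
  set p : ℝ := ‖x‖ with hp
  set q : ℝ := ‖y‖ with hq
  set a : ℝ := ⟪x, u⟫ with hadef
  set b : ℝ := ⟪y, u⟫ with hbdef
  have hp0 : 0 < p := norm_pos_iff.mpr hx0
  have hq0 : 0 < q := norm_pos_iff.mpr hy0
  have hξp : ξ ≤ p := by
    have h2 : t ^ (1 : ℝ) ≤ t ^ (2 - ε) := Real.rpow_le_rpow_of_exponent_le ht1 (by linarith)
    rw [Real.rpow_one] at h2
    have hξt : ξ ≤ t := le_trans (le_trans (le_max_left _ _) (le_max_right _ _)) ht
    linarith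
  set θx : ℝ := InnerProductGeometry.angle x u with hθxdef
  set θy : ℝ := InnerProductGeometry.angle y u with hθydef
  have hθx0 : 0 ≤ θx := InnerProductGeometry.angle_nonneg x u
  have hθy0 : 0 ≤ θy := InnerProductGeometry.angle_nonneg y u
  have hθxπ : θx ≤ Real.pi := InnerProductGeometry.angle_le_pi x u
  have hθyπ : θy ≤ Real.pi := InnerProductGeometry.angle_le_pi y u
  set cx : ℝ := Real.cos θx with hcxdef
  set cy : ℝ := Real.cos θy with hcydef
  have hcxa : cx * p = a := by
    have h := InnerProductGeometry.cos_angle_mul_norm_mul_norm x u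
    rwa [hu, mul_one] at h
  have hcyb : cy * q = b := by
    have h := InnerProductGeometry.cos_angle_mul_norm_mul_norm y u
    rwa [hu, mul_one] at h
  have hπ2 : (1 : ℝ) ≤ Real.pi / 2 := by linarith [Real.pi_gt_three]
  have hcx0 : 0 ≤ cx := Real.cos_nonneg_of_mem_Icc
    ⟨by linarith [Real.pi_gt_three], by linarith [hax, hcs]⟩
  have hcy0 : 0 ≤ cy := Real.cos_nonneg_of_mem_Icc
    ⟨by linarith [Real.pi_gt_three], by linarith [hay, hcs]⟩
  have hcx1 : cx ≤ 1 := Real.cos_le_one θx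
  have hcy1 : cy ≤ 1 := Real.cos_le_one θy
  have ha0 : 0 ≤ a := hcxa ▸ mul_nonneg hcx0 hp0.le
  have hb0 : 0 ≤ b := hcyb ▸ mul_nonneg hcy0 hq0.le
  have hpa0 : 0 < p + a := by linarith
  -- basic difference bounds
  have hpq : |p - q| ≤ ξ := by
    have h := abs_norm_sub_norm_le x y
    have h2 : ‖x - y‖ ≤ ξ := by rw [← norm_neg (x - y), neg_sub]; exact hyx
    exact h.trans h2
  have hba : |b - a| ≤ ξ := by
    have h1 : b - a = ⟪y - x, u⟫ := by rw [inner_sub_left]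
    have h2 := abs_real_inner_le_norm (y - x) u
    rw [hu, mul_one] at h2
    rw [h1]; exact h2.trans hyx
  have hq2p : q ≤ 2 * p := by
    have := abs_le.mp hpq
    linarith
  -- perpendicular components
  set xp : EuclideanSpace ℝ (Fin n) := x - a • u with hxpdef
  set yp : EuclideanSpace ℝ (Fin n) := y - b • u with hypdef
  have hXsq : ‖xp‖ ^ 2 = p ^ 2 - a ^ 2 := by
    rw [hxpdef, norm_sub_sq_real, real_inner_smul_right, norm_smul, hu, mul_one,
      Real.norm_eq_abs, sq_abs, ← hadef, ← hp]
    ring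
  have hYsq : ‖yp‖ ^ 2 = q ^ 2 - b ^ 2 := by
    rw [hypdef, norm_sub_sq_real, real_inner_smul_right, norm_smul, hu, mul_one,
      Real.norm_eq_abs, sq_abs, ← hbdef, ← hq]
    ring
  set X : ℝ := ‖xp‖ with hXdef
  set Y : ℝ := ‖yp‖ with hYdef
  have hX0 : 0 ≤ X := norm_nonneg _
  have hY0 : 0 ≤ Y := norm_nonneg _
  -- |X - Y| ≤ ξ
  have hXY : |X - Y| ≤ ξ := by
    have hdiff : xp - yp = (x - y) - (a - b) • u := by
      rw [hxpdef, hypdef, sub_smul]; abel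
    have hab2 : a - b = ⟪x - y, u⟫ := by rw [inner_sub_left]
    have h1 : ‖xp - yp‖ ^ 2 ≤ ξ ^ 2 := by
      rw [hdiff, norm_sub_sq_real, real_inner_smul_right, norm_smul, hu, mul_one,
        Real.norm_eq_abs, sq_abs, ← hab2]
      have hxy2 : ‖x - y‖ ≤ ξ := by
        rw [← norm_neg (x - y), neg_sub]; exact hyx
      have h4 : ‖x - y‖ ^ 2 ≤ ξ ^ 2 := pow_le_pow_left₀ (norm_nonneg _) hxy2 2
      have h5 : (a - b) * (a - b) = (a - b) ^ 2 := by ring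
      linarith [sq_nonneg (a - b)]
    have h2 : ‖xp - yp‖ ≤ ξ :=
      (pow_le_pow_iff_left₀ (norm_nonneg _) hξ.le two_ne_zero).mp h1
    exact (abs_norm_sub_norm_le xp yp).trans h2
  -- size of perpendicular components
  have hXle : X ≤ p * (c * s) :=
    perp_norm_le_aux hθx0 hθxπ hax hcxa hXsq hX0 hp0.le
  have hYle : Y ≤ q * (c * s) :=
    perp_norm_le_aux hθy0 hθyπ hay hcyb hYsq hY0 hq0.le
  have hXYsum : X + Y ≤ 3 * p * (c * s) := by
    have : q * (c * s) ≤ 2 * p * (c * s) :=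
      mul_le_mul_of_nonneg_right hq2p (by positivity)
    linarith
  -- 1 - cy small
  have hcy1s : 1 - cy ≤ c ^ 2 * s ^ 2 / 2 := by
    have h1 : 1 - θy ^ 2 / 2 ≤ cy := Real.one_sub_sq_div_two_le_cos
    have h2 : θy ^ 2 ≤ (c * s) ^ 2 := pow_le_pow_left₀ hθy0 hay 2
    have h3 : (c * s) ^ 2 = c ^ 2 * s ^ 2 := by ring
    linarith
  -- q - b bound
  have hqb0 : 0 ≤ q - b := by
    have h := mul_nonneg hq0.le (show (0:ℝ) ≤ 1 - cy by linarith)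
    have hAB : q * (1 - cy) = q - cy * q := by ring
    linarith [hcyb]
  have hqb : q - b ≤ p * (c ^ 2 * s ^ 2) := by
    have h1 : q - b = q * (1 - cy) := by rw [← hcyb]; ring
    have h2 : q * (1 - cy) ≤ q * (c ^ 2 * s ^ 2 / 2) :=
      mul_le_mul_of_nonneg_left hcy1s hq0.le
    have h3 : q * (c ^ 2 * s ^ 2 / 2) ≤ 2 * p * (c ^ 2 * s ^ 2 / 2) :=
      mul_le_mul_of_nonneg_right hq2p (by positivity)
    have h4 : 2 * p * (c ^ 2 * s ^ 2 / 2) = p * (c ^ 2 * s ^ 2) := by ring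
    linarith
  -- key algebraic identity
  have hcxval : cx = a / p := by field_simp [← hcxa]; exact hcxa
  have hcyval : cy = b / q := by field_simp [← hcyb]; exact hcyb
  have hkey : p * (cy - cx) =
      (cy - 1) * (p - q) + ((X ^ 2 - Y ^ 2) + (q - b) * ((q + b) - (p + a))) / (p + a) := by
    rw [hXsq, hYsq, hcxval, hcyval]
    field_simp
    ring
  -- numerator bound
  have hnum : |(X ^ 2 - Y ^ 2) + (q - b) * ((q + b) - (p + a))| ≤
      ξ * (3 * p * (c * s)) + p * (c ^ 2 * s ^ 2) * (2 * ξ) := by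
    have hX2Y2 : |X ^ 2 - Y ^ 2| ≤ ξ * (3 * p * (c * s)) := by
      have h1 : |X ^ 2 - Y ^ 2| = |X - Y| * (X + Y) := by
        rw [← abs_of_nonneg (add_nonneg hX0 hY0), ← abs_mul]
        congr 1; ring
      rw [h1]
      exact mul_le_mul hXY hXYsum (by linarith) hξ.le
    have hsecond : |(q - b) * ((q + b) - (p + a))| ≤ p * (c ^ 2 * s ^ 2) * (2 * ξ) := by
      rw [abs_mul, abs_of_nonneg hqb0]
      have h2 : |(q + b) - (p + a)| ≤ 2 * ξ := by
        have h3 : (q + b) - (p + a) = -(p - q) + (b - a) := by ring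
        rw [h3]
        calc |-(p - q) + (b - a)| ≤ |-(p - q)| + |b - a| := abs_add_le _ _
        _ = |p - q| + |b - a| := by rw [abs_neg]
        _ ≤ 2 * ξ := by linarith
      exact mul_le_mul hqb h2 (abs_nonneg _) (by positivity)
    calc |(X ^ 2 - Y ^ 2) + (q - b) * ((q + b) - (p + a))| ≤
        |X ^ 2 - Y ^ 2| + |(q - b) * ((q + b) - (p + a))| := abs_add_le _ _
    _ ≤ ξ * (3 * p * (c * s)) + p * (c ^ 2 * s ^ 2) * (2 * ξ) := by linarith
  -- put everything together
  have hmain : |p * (cy - cx)| ≤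
      (c ^ 2 * s ^ 2 / 2) * ξ +
        (ξ * (3 * p * (c * s)) + p * (c ^ 2 * s ^ 2) * (2 * ξ)) / (p + a) := by
    rw [hkey]
    calc |(cy - 1) * (p - q) +
          ((X ^ 2 - Y ^ 2) + (q - b) * ((q + b) - (p + a))) / (p + a)| ≤
        |(cy - 1) * (p - q)| +
          |((X ^ 2 - Y ^ 2) + (q - b) * ((q + b) - (p + a))) / (p + a)| := abs_add_le _ _
    _ ≤ (c ^ 2 * s ^ 2 / 2) * ξ +
          (ξ * (3 * p * (c * s)) + p * (c ^ 2 * s ^ 2) * (2 * ξ)) / (p + a) := by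
        gcongr ?_ + ?_
        · rw [abs_mul]
          have h1 : |cy - 1| ≤ c ^ 2 * s ^ 2 / 2 := by
            rw [abs_sub_comm, abs_of_nonneg (by linarith)]
            linarith
          exact mul_le_mul h1 hpq (abs_nonneg _) (by positivity)
        · rw [abs_div, abs_of_pos hpa0]
          exact div_le_div_of_nonneg_right hnum hpa0.le
  have hdiv : (ξ * (3 * p * (c * s)) + p * (c ^ 2 * s ^ 2) * (2 * ξ)) / (p + a) ≤
      3 * ξ * (c * s) + 2 * ξ * (c ^ 2 * s ^ 2) := by
    have hnn : 0 ≤ ξ * (3 * p * (c * s)) + p * (c ^ 2 * s ^ 2) * (2 * ξ) := by positivity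
    calc (ξ * (3 * p * (c * s)) + p * (c ^ 2 * s ^ 2) * (2 * ξ)) / (p + a) ≤
        (ξ * (3 * p * (c * s)) + p * (c ^ 2 * s ^ 2) * (2 * ξ)) / p := by
          apply div_le_div_of_nonneg_left hnn hp0 (by linarith)
    _ = 3 * ξ * (c * s) + 2 * ξ * (c ^ 2 * s ^ 2) := by field_simp
  have hfinal : |p * (cy - cx)| ≤ (3 * ξ * c + 3 * ξ * c ^ 2) * s := by
    have hs2 : s ^ 2 ≤ s := by
      have h := mul_le_mul_of_nonneg_right hs1 hs0.le
      calc s ^ 2 = s * s := sq s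
      _ ≤ 1 * s := h
      _ = s := one_mul s
    calc |p * (cy - cx)| ≤ (c ^ 2 * s ^ 2 / 2) * ξ +
          (ξ * (3 * p * (c * s)) + p * (c ^ 2 * s ^ 2) * (2 * ξ)) / (p + a) := hmain
    _ ≤ (c ^ 2 * s ^ 2 / 2) * ξ + (3 * ξ * (c * s) + 2 * ξ * (c ^ 2 * s ^ 2)) := by linarith
    _ ≤ (3 * ξ * c + 3 * ξ * c ^ 2) * s := by
      have h5 : 5 / 2 * (ξ * c ^ 2) * s ^ 2 ≤ 5 / 2 * (ξ * c ^ 2) * s :=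
        mul_le_mul_of_nonneg_left hs2 (by positivity)
      have h6 : (0:ℝ) ≤ ξ * c ^ 2 * s := by positivity
      linarith
  exact hfinal
end

section
/- Let x, y ∈ ℝⁿ \ {0}, u a unit vector, |y − x| ≤ ξ, |x| ≥ t^{2-ε}, and suppose the angle of x with u is O(t^{-ε/2}) in the sense cos∠(x,u) = 1 + O(t^{-ε}). Then ⟨u, x⟩ − ⟨u, y⟩ = |x| − |y| + O(t^{-ε/2}) as t → ∞. -/
open RealInnerProductSpace

set_option maxHeartbeats 1000000 in
/-- Inner-product difference estimate: if cos∠(x,u) = 1 + O(t^{-ε}) then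
    ⟨u,x⟩ - ⟨u,y⟩ = ‖x‖ - ‖y‖ + O(t^{-ε/2}). -/
theorem inner_difference_estimate (n : ℕ) (ξ ε c : ℝ) (hξ : 0 < ξ) (hε : 0 < ε)
    (hε1 : ε < 1) (hc : 0 < c) (u : EuclideanSpace ℝ (Fin n)) (hu : ‖u‖ = 1) :
    ∃ C T : ℝ, 0 < C ∧ ∀ t : ℝ, T ≤ t → ∀ x y : EuclideanSpace ℝ (Fin n),
      x ≠ 0 → y ≠ 0 → ‖y - x‖ ≤ ξ → t ^ (2 - ε) ≤ ‖x‖ →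
      |Real.cos (InnerProductGeometry.angle x u) - 1| ≤ c * t ^ (-ε) →
      |(⟪u, x⟫ - ⟪u, y⟫) - (‖x‖ - ‖y‖)| ≤ C * t ^ (-(ε / 2)) := by
  refine ⟨ξ * (2 * Real.sqrt (2 * c) + 2 * ξ), 1, by positivity, ?_⟩
  intro t ht x y hx hy hyx hxt hcos
  have ht0 : (0:ℝ) < t := lt_of_lt_of_le one_pos ht
  have ha0 : 0 < ‖x‖ := norm_pos_iff.mpr hx
  have hb0 : 0 < ‖y‖ := norm_pos_iff.mpr hy
  set a := ‖x‖ with ha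
  set b := ‖y‖ with hb
  have hs : 0 < a + b := by linarith
  have hone : (1:ℝ) ≤ t ^ (2 - ε) := Real.one_le_rpow ht (by linarith)
  have ha1 : 1 ≤ a := le_trans hone hxt
  have hp0 : 0 < t ^ (-(ε/2)) := Real.rpow_pos_of_pos ht0 _
  have hq0 : 0 < t ^ (-ε) := Real.rpow_pos_of_pos ht0 _
  -- cosine facts
  set θ := InnerProductGeometry.angle x u with hθ
  have hcosx : ⟪x, u⟫ = a * Real.cos θ := by
    have := InnerProductGeometry.cos_angle (x := x) (y := u)
    rw [hu, mul_one] at this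
    rw [hθ, this, ← ha]
    field_simp [ha0.ne']
  have hcos1 : Real.cos θ ≤ 1 := Real.cos_le_one _
  have hkey : 1 - Real.cos θ ≤ c * t ^ (-ε) := by
    have := (abs_le.mp hcos).1; linarith
  -- rpow arithmetic
  have hsq : (t ^ (-(ε/2)))^2 = t ^ (-ε) := by
    rw [← Real.rpow_natCast (t ^ (-(ε/2))) 2, ← Real.rpow_mul ht0.le]
    norm_num
  -- bound ‖a•u - x‖
  have hq2 : ‖a • u - x‖^2 = 2 * a^2 * (1 - Real.cos θ) := by
    rw [norm_sub_sq_real, norm_smul, real_inner_smul_left, real_inner_comm, hcosx, hu]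
    simp [Real.norm_eq_abs, abs_of_pos ha0]
    ring
  have hqb : ‖a • u - x‖ ≤ a * Real.sqrt (2*c) * t ^ (-(ε/2)) := by
    have h1 : ‖a • u - x‖^2 ≤ (a * Real.sqrt (2*c) * t ^ (-(ε/2)))^2 := by
      have h2 : (a * Real.sqrt (2*c) * t ^ (-(ε/2)))^2 = a^2 * (2*c) * t ^ (-ε) := by
        rw [mul_pow, mul_pow, Real.sq_sqrt (by positivity), hsq]
      rw [hq2, h2]
      nlinarith [sq_nonneg a]
    have := Real.sqrt_le_sqrt h1
    rwa [Real.sqrt_sq (norm_nonneg _), Real.sqrt_sq (by positivity)] at this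
  -- bound ‖b•u - y‖
  have habξ : |b - a| ≤ ξ := le_trans (abs_norm_sub_norm_le y x) hyx
  have hxyξ : ‖x - y‖ ≤ ξ := by rwa [norm_sub_rev]
  have hrb : ‖b • u - y‖ ≤ a * Real.sqrt (2*c) * t ^ (-(ε/2)) + 2*ξ := by
    have hdecomp : b • u - y = (b - a) • u + (a • u - x) + (x - y) := by
      rw [sub_smul]; abel
    calc ‖b • u - y‖ ≤ ‖(b - a) • u‖ + ‖a • u - x‖ + ‖x - y‖ := by
          rw [hdecomp]; exact le_trans (norm_add_le _ _) (by gcongr; exact norm_add_le _ _)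
      _ ≤ ξ + (a * Real.sqrt (2*c) * t ^ (-(ε/2))) + ξ := by
          gcongr
          rw [norm_smul, hu, mul_one, Real.norm_eq_abs]; exact habξ
      _ = a * Real.sqrt (2*c) * t ^ (-(ε/2)) + 2*ξ := by ring
  -- key identity
  have hid : (⟪u, x⟫ - ⟪u, y⟫) - (a - b) = ⟪u - (a+b)⁻¹ • (x + y), x - y⟫ := by
    have hxy : ⟪x + y, x - y⟫ = a^2 - b^2 := by
      rw [inner_sub_right, inner_add_left, inner_add_left, real_inner_comm y x,
        real_inner_self_eq_norm_sq, real_inner_self_eq_norm_sq]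
      ring
    rw [inner_sub_left, real_inner_smul_left, hxy, inner_sub_right]
    field_simp
    ring
  -- main bound
  have hnorm : ‖u - (a+b)⁻¹ • (x + y)‖ ≤ (a+b)⁻¹ * (2 * (a * Real.sqrt (2*c) * t ^ (-(ε/2))) + 2*ξ) := by
    have heq : u - (a+b)⁻¹ • (x + y) = (a+b)⁻¹ • ((a+b) • u - (x + y)) := by
      rw [smul_sub, smul_smul, inv_mul_cancel₀ hs.ne', one_smul]
    rw [heq, norm_smul, Real.norm_eq_abs, abs_of_pos (inv_pos.mpr hs)]
    have hdec : (a+b) • u - (x + y) = (a • u - x) + (b • u - y) := by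
      rw [add_smul]; abel
    gcongr
    calc ‖(a+b) • u - (x + y)‖ ≤ ‖a • u - x‖ + ‖b • u - y‖ := by
          rw [hdec]; exact norm_add_le _ _
      _ ≤ (a * Real.sqrt (2*c) * t ^ (-(ε/2))) + (a * Real.sqrt (2*c) * t ^ (-(ε/2)) + 2*ξ) := by
          gcongr
      _ = 2 * (a * Real.sqrt (2*c) * t ^ (-(ε/2))) + 2*ξ := by ring
  have hCS : |(⟪u, x⟫ - ⟪u, y⟫) - (a - b)| ≤ ‖u - (a+b)⁻¹ • (x + y)‖ * ‖x - y‖ := by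
    rw [hid]; exact abs_real_inner_le_norm _ _
  -- put together
  have hainv : a⁻¹ ≤ t ^ (-(ε/2)) := by
    have h1 : a⁻¹ ≤ (t ^ (2 - ε))⁻¹ := by
      apply inv_anti₀ (by positivity) hxt
    have h2 : (t ^ (2 - ε))⁻¹ = t ^ (-(2-ε)) := (Real.rpow_neg ht0.le _).symm
    have h3 : t ^ (-(2-ε)) ≤ t ^ (-(ε/2)) :=
      Real.rpow_le_rpow_of_exponent_le ht (by linarith)
    linarith
  have hsinv : (a+b)⁻¹ ≤ a⁻¹ := by
    apply inv_anti₀ ha0; linarith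
  calc |(⟪u, x⟫ - ⟪u, y⟫) - (a - b)|
      ≤ ‖u - (a+b)⁻¹ • (x + y)‖ * ‖x - y‖ := hCS
    _ ≤ ((a+b)⁻¹ * (2 * (a * Real.sqrt (2*c) * t ^ (-(ε/2))) + 2*ξ)) * ξ := by
        gcongr
    _ ≤ (a⁻¹ * (2 * (a * Real.sqrt (2*c) * t ^ (-(ε/2))) + 2*ξ)) * ξ := by
        gcongr
    _ = (2 * Real.sqrt (2*c) * t ^ (-(ε/2)) + 2*ξ*a⁻¹) * ξ := by
        have h1 : a⁻¹ * a = 1 := inv_mul_cancel₀ ha0.ne'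
        linear_combination (2 * Real.sqrt (2*c) * t ^ (-(ε/2)) * ξ) * h1
    _ ≤ (2 * Real.sqrt (2*c) * t ^ (-(ε/2)) + 2*ξ*(t ^ (-(ε/2)))) * ξ := by
        gcongr
    _ = ξ * (2 * Real.sqrt (2 * c) + 2 * ξ) * t ^ (-(ε / 2)) := by ring
end
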